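/- The orthogonality graph of the 24 vectors (1,0,0,0), (0,1,0,0), (0,0,1,0), (0,0,0,1), (0,1,1,0), (1,0,0,-1), (1,0,0,1), (0,1,-1,0), (1,1,1,1), (1,-1,1,-1), (1,-1,-1,1), (1,1,-1,-1), (1,-1,0,0), (1,1,0,0), (0,0,1,1), (0,0,1,-1), (-1,1,1,1), (1,1,1,-1), (1,-1,1,1), (1,1,-1,1), (1,0,1,0), (0,1,0,1), (1,0,-1,0), (0,1,0,-1) in ℝ^4 is isomorphic to the Cayley graph of the symmetric group S_4 with connection set equal to the set of elements of order 2 in S_4. -/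

import Mathlib

/-- The 24 vectors in ℝ⁴ defining Piovesan's graph `G_p`. -/
def piovesanVecs : Fin 24 → (Fin 4 → ℝ) :=
  ![![1,0,0,0], ![0,1,0,0], ![0,0,1,0], ![0,0,0,1],
    ![0,1,1,0], ![1,0,0,-1], ![1,0,0,1], ![0,1,-1,0],
    ![1,1,1,1], ![1,-1,1,-1], ![1,-1,-1,1], ![1,1,-1,-1],
    ![1,-1,0,0], ![1,1,0,0], ![0,0,1,1], ![0,0,1,-1],
    ![-1,1,1,1], ![1,1,1,-1], ![1,-1,1,1], ![1,1,-1,1],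
    ![1,0,1,0], ![0,1,0,1], ![1,0,-1,0], ![0,1,0,-1]]

/-- The orthogonality graph of the 24 vectors: vertices are the (distinct) vectors,
indexed by `Fin 24`, adjacent iff orthogonal in ℝ⁴. -/
def Gp : SimpleGraph (Fin 24) :=
  SimpleGraph.fromRel (fun i j => dotProduct (piovesanVecs i) (piovesanVecs j) = 0)

/-- The Cayley graph of `S₄` with connection set the elements of order two. -/
def CayS4 : SimpleGraph (Equiv.Perm (Fin 4)) :=
  SimpleGraph.fromRel (fun g h => h * g⁻¹ ≠ 1 ∧ (h * g⁻¹) ^ 2 = 1)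

/-- Integer versions of the vectors. -/
def intVecs : Fin 24 → (Fin 4 → ℤ) :=
  ![![1,0,0,0], ![0,1,0,0], ![0,0,1,0], ![0,0,0,1],
    ![0,1,1,0], ![1,0,0,-1], ![1,0,0,1], ![0,1,-1,0],
    ![1,1,1,1], ![1,-1,1,-1], ![1,-1,-1,1], ![1,1,-1,-1],
    ![1,-1,0,0], ![1,1,0,0], ![0,0,1,1], ![0,0,1,-1],
    ![-1,1,1,1], ![1,1,1,-1], ![1,-1,1,1], ![1,1,-1,1],
    ![1,0,1,0], ![0,1,0,1], ![1,0,-1,0], ![0,1,0,-1]]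

set_option maxHeartbeats 2000000 in
lemma piovesan_cast : ∀ i k, piovesanVecs i k = ((intVecs i k : ℤ) : ℝ) := by
  intro i k
  fin_cases i <;> fin_cases k <;> norm_num [piovesanVecs, intVecs]

lemma dot_iff (i j : Fin 24) :
    dotProduct (piovesanVecs i) (piovesanVecs j) = 0 ↔
      dotProduct (intVecs i) (intVecs j) = 0 := by
  have : dotProduct (piovesanVecs i) (piovesanVecs j)
      = ((dotProduct (intVecs i) (intVecs j) : ℤ) : ℝ) := by
    unfold dotProduct
    push_cast
    exact Finset.sum_congr rfl fun k _ => by rw [piovesan_cast i k, piovesan_cast j k]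
  rw [this, Int.cast_eq_zero]

def permF : Fin 24 → Equiv.Perm (Fin 4) :=
  ![Equiv.mk ![0, 1, 2, 3] ![0, 1, 2, 3] (by decide) (by decide),
    Equiv.mk ![1, 0, 3, 2] ![1, 0, 3, 2] (by decide) (by decide),
    Equiv.mk ![2, 3, 0, 1] ![2, 3, 0, 1] (by decide) (by decide),
    Equiv.mk ![3, 2, 1, 0] ![3, 2, 1, 0] (by decide) (by decide),
    Equiv.mk ![0, 2, 1, 3] ![0, 2, 1, 3] (by decide) (by decide),
    Equiv.mk ![1, 3, 0, 2] ![2, 0, 3, 1] (by decide) (by decide),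
    Equiv.mk ![2, 0, 3, 1] ![1, 3, 0, 2] (by decide) (by decide),
    Equiv.mk ![3, 1, 2, 0] ![3, 1, 2, 0] (by decide) (by decide),
    Equiv.mk ![1, 3, 2, 0] ![3, 0, 2, 1] (by decide) (by decide),
    Equiv.mk ![0, 2, 3, 1] ![0, 3, 1, 2] (by decide) (by decide),
    Equiv.mk ![3, 1, 0, 2] ![2, 1, 3, 0] (by decide) (by decide),
    Equiv.mk ![2, 0, 1, 3] ![1, 2, 0, 3] (by decide) (by decide),
    Equiv.mk ![2, 3, 1, 0] ![3, 2, 0, 1] (by decide) (by decide),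
    Equiv.mk ![3, 2, 0, 1] ![2, 3, 1, 0] (by decide) (by decide),
    Equiv.mk ![0, 1, 3, 2] ![0, 1, 3, 2] (by decide) (by decide),
    Equiv.mk ![1, 0, 2, 3] ![1, 0, 2, 3] (by decide) (by decide),
    Equiv.mk ![3, 0, 2, 1] ![1, 3, 2, 0] (by decide) (by decide),
    Equiv.mk ![2, 1, 3, 0] ![3, 1, 0, 2] (by decide) (by decide),
    Equiv.mk ![1, 2, 0, 3] ![2, 0, 1, 3] (by decide) (by decide),
    Equiv.mk ![0, 3, 1, 2] ![0, 2, 3, 1] (by decide) (by decide),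
    Equiv.mk ![3, 0, 1, 2] ![1, 2, 3, 0] (by decide) (by decide),
    Equiv.mk ![2, 1, 0, 3] ![2, 1, 0, 3] (by decide) (by decide),
    Equiv.mk ![1, 2, 3, 0] ![3, 0, 1, 2] (by decide) (by decide),
    Equiv.mk ![0, 3, 2, 1] ![0, 3, 2, 1] (by decide) (by decide)]

set_option maxHeartbeats 4000000 in
lemma permF_bij : Function.Bijective permF := by decide

set_option maxHeartbeats 16000000 in
theorem Gp_iso_cayley : Nonempty (Gp ≃g CayS4) := by
  refine ⟨⟨Equiv.ofBijective permF permF_bij, ?_⟩⟩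
  intro i j
  show CayS4.Adj (permF i) (permF j) ↔ Gp.Adj i j
  simp only [Gp, CayS4, SimpleGraph.fromRel_adj, dot_iff]
  revert i j
  decide
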